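/- Let G = G₁ * G₂ be a free product of two nontrivial groups G₁ and G₂, and let N be a nontrivial, finitely generated normal subgroup of G. Then N has finite index in G. Consequently, a finitely generated group G that possesses a nontrivial finitely generated normal subgroup K with G/K infinite does not decompose as a free product of two nontrivial groups. -/

import Mathlib

open Monoid

namespace FPFI

variable {M : Bool → Type} [∀ i, Group (M i)] [∀ i, DecidableEq (M i)]

/-- product of a list of letters -/
def wprod (l : List (Σ i, M i)) : CoprodI M := (l.map fun x => CoprodI.of x.snd).prod

@[simp] lemma wprod_nil : wprod ([] : List (Σ i, M i)) = 1 := rfl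

lemma wprod_append (l₁ l₂ : List (Σ i, M i)) : wprod (l₁ ++ l₂) = wprod l₁ * wprod l₂ := by
  simp [wprod]

lemma wprod_concat (l : List (Σ i, M i)) (a : Σ i, M i) :
    wprod (l ++ [a]) = wprod l * CoprodI.of a.snd := by
  simp [wprod_append, wprod]

/-- the normal form of an element -/
def nf (g : CoprodI M) : List (Σ i, M i) := (CoprodI.Word.equiv g).toList

lemma nf_ne_one (g : CoprodI M) : ∀ x ∈ nf g, x.snd ≠ 1 := (CoprodI.Word.equiv g).ne_one

lemma nf_chain (g : CoprodI M) : (nf g).Chain' fun x y => x.fst ≠ y.fst :=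
  (CoprodI.Word.equiv g).chain_ne

lemma wprod_nf (g : CoprodI M) : wprod (nf g) = g := by
  have := (CoprodI.Word.equiv (M := M)).symm_apply_apply g
  simpa [CoprodI.Word.equiv, CoprodI.Word.prod, nf, wprod] using this

lemma nf_eq (l : List (Σ i, M i)) (h1 : ∀ x ∈ l, x.snd ≠ 1)
    (h2 : l.Chain' fun x y => x.fst ≠ y.fst) : nf (wprod l) = l := by
  have : (CoprodI.Word.equiv (M := M)).symm ⟨l, h1, h2⟩ = wprod l := by
    simp [CoprodI.Word.equiv, CoprodI.Word.prod, wprod]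
  have h := congrArg (CoprodI.Word.equiv (M := M)) this
  rw [Equiv.apply_symm_apply] at h
  rw [nf, ← h]

@[simp] lemma nf_one : nf (1 : CoprodI M) = [] := by
  have := nf_eq ([] : List (Σ i, M i)) (by simp) (by simp [List.Chain'])
  simpa using this

lemma nf_eq_nil_iff {g : CoprodI M} : nf g = [] ↔ g = 1 := by
  constructor
  · intro h
    have := wprod_nf g
    rw [h] at this
    simpa using this.symm
  · rintro rfl; simp

lemma nf_of {i : Bool} {m : M i} (hm : m ≠ 1) : nf (CoprodI.of m) = [⟨i, m⟩] := by
  have := nf_eq [⟨i, m⟩] (by simpa) (by simp [List.Chain'])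
  simpa [wprod] using this

end FPFI
open Monoid
namespace FPFI
set_option linter.unusedSectionVars false
variable {M : Bool → Type} [∀ i, Group (M i)] [∀ i, DecidableEq (M i)]

lemma letter_lemma (g : CoprodI M) (i : Bool) (m : M i) :
    (nf g).length - 1 ≤ (nf (g * CoprodI.of m)).length ∧
    (2 ≤ (nf g).length → (nf (g * CoprodI.of m)).head? = (nf g).head?) := by
  by_cases hm : m = 1
  · subst hm; simp
  rcases (nf g).eq_nil_or_concat with h | ⟨l', a, h0⟩
  · have hg1 : g = 1 := nf_eq_nil_iff.mp h
    subst hg1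
    rw [h]
    simp [nf_of hm]
  · have h : nf g = l' ++ [a] := by simpa using h0
    have hg : g = wprod l' * CoprodI.of a.snd := by
      conv_lhs => rw [← wprod_nf g, h, wprod_concat]
    have hch : (l' ++ [a]).Chain' fun x y => x.fst ≠ y.fst := h ▸ nf_chain g
    have hch' := List.isChain_append.mp hch
    have hne : ∀ x ∈ l' ++ [a], x.snd ≠ 1 := fun x hx => nf_ne_one g x (h ▸ hx)
    obtain ⟨j, x⟩ := a
    by_cases hia : j = i
    · subst hia
      by_cases hxm : x * m = 1
      · have key : g * CoprodI.of m = wprod l' := by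
          rw [hg, mul_assoc, ← MonoidHom.map_mul, hxm, MonoidHom.map_one, mul_one]
        have hnf : nf (g * CoprodI.of m) = l' := by
          rw [key]
          exact nf_eq l' (fun y hy => hne y (List.mem_append_left _ hy)) hch'.1
        rw [hnf, h]
        constructor
        · simp
        · intro h2
          cases l' with
          | nil => simp at h2
          | cons b t => simp
      · have key : g * CoprodI.of m = wprod (l' ++ [⟨j, x * m⟩]) := by
          rw [wprod_concat, hg, mul_assoc, ← MonoidHom.map_mul]
        have hnf : nf (g * CoprodI.of m) = l' ++ [⟨j, x * m⟩] := by
          rw [key]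
          refine nf_eq _ ?_ ?_
          · intro y hy
            rcases List.mem_append.mp hy with hy | hy
            · exact hne y (List.mem_append_left _ hy)
            · simp at hy; subst hy; simpa using hxm
          · refine List.isChain_append.mpr ⟨hch'.1, List.isChain_singleton _, ?_⟩
            intro p hp q hq
            simp at hq; subst hq
            exact hch'.2.2 p hp ⟨j, x⟩ (by simp)
        rw [hnf, h]
        constructor
        · simp
        · intro h2
          cases l' with
          | nil => simp at h2
          | cons b t => simp
    · have key : g * CoprodI.of m = wprod ((l' ++ [⟨j, x⟩]) ++ [⟨i, m⟩]) := by
        rw [wprod_concat, wprod_concat, hg]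
      have hnf : nf (g * CoprodI.of m) = (l' ++ [⟨j, x⟩]) ++ [⟨i, m⟩] := by
        rw [key]
        refine nf_eq _ ?_ ?_
        · intro y hy
          rcases List.mem_append.mp hy with hy | hy
          · exact hne y hy
          · simp at hy; subst hy; simpa using hm
        · refine List.isChain_append.mpr ⟨hch, List.isChain_singleton _, ?_⟩
          intro p hp q hq
          simp at hq; subst hq
          have hpv : (⟨j, x⟩ : Σ i, M i) = p := by
            rw [List.getLast?_append] at hp
            simpa using hp
          subst hpv
          simpa using hia
      rw [hnf, h]
      constructor
      · simp
      · intro h2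
        rw [List.append_assoc]
        cases l' with
        | nil => simp at h2
        | cons b t => simp
end FPFI
open Monoid
namespace FPFI
set_option linter.unusedSectionVars false
variable {M : Bool → Type} [∀ i, Group (M i)] [∀ i, DecidableEq (M i)]

lemma wprod_cons (a : Σ i, M i) (t : List (Σ i, M i)) :
    wprod (a :: t) = CoprodI.of a.snd * wprod t := by
  simp [wprod]

lemma words_lemma (l : List (Σ i, M i)) : ∀ g : CoprodI M,
    (nf g).length - l.length ≤ (nf (g * wprod l)).length ∧
    (l.length + 2 ≤ (nf g).length → (nf (g * wprod l)).head? = (nf g).head?) := by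
  induction l with
  | nil => intro g; simp
  | cons a t ih =>
    intro g
    have hassoc : g * wprod (a :: t) = (g * CoprodI.of a.snd) * wprod t := by
      rw [wprod_cons, mul_assoc]
    have h1 := letter_lemma g a.fst a.snd
    have h2 := ih (g * CoprodI.of a.snd)
    constructor
    · rw [hassoc]
      have := h2.1
      have := h1.1
      simp only [List.length_cons]
      omega
    · intro hlen
      simp only [List.length_cons] at hlen
      have e1 : (nf (g * CoprodI.of a.snd)).head? = (nf g).head? := h1.2 (by omega)
      have e2 : (nf ((g * CoprodI.of a.snd) * wprod t)).head? = (nf (g * CoprodI.of a.snd)).head? :=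
        h2.2 (by have := h1.1; omega)
      rw [hassoc, e2, e1]

lemma nf_mul_append {g h : CoprodI M} (hg : nf g ≠ []) (hh : nf h ≠ [])
    (hsep : ∀ x ∈ (nf g).getLast?, ∀ y ∈ (nf h).head?, x.fst ≠ y.fst) :
    nf (g * h) = nf g ++ nf h := by
  have key : g * h = wprod (nf g ++ nf h) := by rw [wprod_append, wprod_nf, wprod_nf]
  rw [key]
  refine nf_eq _ ?_ ?_
  · intro x hx
    rcases List.mem_append.mp hx with hx | hx
    · exact nf_ne_one g x hx
    · exact nf_ne_one h x hx
  · exact List.isChain_append.mpr ⟨nf_chain g, nf_chain h, hsep⟩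

lemma wprod_reverse_inv (l : List (Σ i, M i)) :
    wprod (l.reverse.map fun x => (⟨x.fst, x.snd⁻¹⟩ : Σ i, M i)) = (wprod l)⁻¹ := by
  induction l with
  | nil => simp
  | cons a t ih =>
    rw [wprod_cons, List.reverse_cons, List.map_append, wprod_append, ih]
    simp [wprod, mul_comm]

lemma nf_inv (g : CoprodI M) :
    nf g⁻¹ = (nf g).reverse.map fun x => (⟨x.fst, x.snd⁻¹⟩ : Σ i, M i) := by
  have key : g⁻¹ = wprod ((nf g).reverse.map fun x => (⟨x.fst, x.snd⁻¹⟩ : Σ i, M i)) := by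
    rw [wprod_reverse_inv, wprod_nf]
  rw [key]
  refine nf_eq _ ?_ ?_
  · intro x hx
    simp only [List.mem_map, List.mem_reverse] at hx
    obtain ⟨y, hy, rfl⟩ := hx
    simpa using inv_ne_one.mpr (nf_ne_one g y hy)
  · rw [List.Chain', List.isChain_map, List.isChain_reverse]
    exact List.IsChain.imp (fun hne => fun b hb => Ne.symm hb) (nf_chain g)

lemma nf_pow (w : CoprodI M) (hw : nf w ≠ [])
    (hsep : ∀ x ∈ (nf w).getLast?, ∀ y ∈ (nf w).head?, x.fst ≠ y.fst) (n : ℕ) :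
    (nf (w ^ (n+1))).head? = (nf w).head? ∧ (nf (w ^ (n+1))).getLast? = (nf w).getLast? ∧
      (n+1) * (nf w).length ≤ (nf (w ^ (n+1))).length := by
  induction n with
  | zero => simp
  | succ n ih =>
    have hnn : nf (w ^ (n+1)) ≠ [] := by
      intro hcon
      have h2 := ih.2.2
      rw [hcon] at h2
      simp only [List.length_nil, Nat.le_zero, Nat.mul_eq_zero] at h2
      rcases h2 with h2 | h2
      · omega
      · exact hw (List.length_eq_zero_iff.mp h2)
    have key : nf (w ^ (n+2)) = nf w ++ nf (w ^ (n+1)) := by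
      have : w ^ (n+2) = w * w ^ (n+1) := by rw [pow_succ']
      rw [this]
      refine nf_mul_append hw hnn ?_
      intro x hx y hy
      rw [ih.1] at hy
      exact hsep x hx y hy
    refine ⟨?_, ?_, ?_⟩
    · rw [key, List.head?_append, List.head?_eq_head hw]; rfl
    · rw [key, List.getLast?_append, List.getLast?_eq_getLast hnn]
      simp [ih.2.1.symm, List.getLast?_eq_getLast hnn]
    · rw [key, List.length_append]
      have := ih.2.2
      nlinarith [List.length_pos_iff.mpr hw]
end FPFI
open Monoid
namespace FPFI
set_option linter.unusedSectionVars false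
variable {M : Bool → Type} [∀ i, Group (M i)] [∀ i, DecidableEq (M i)]

/-- the "side" of an edge: the index of the first letter of its normal form -/
def sigma (g : CoprodI M) : Option Bool := ((nf g).head?).map Sigma.fst

/-- adjacency of edges in the Bass-Serre tree -/
def Adj (g h : CoprodI M) : Prop := ∃ (i : Bool) (m : M i), h = g * CoprodI.of m

lemma Adj.symm {g h : CoprodI M} : Adj g h → Adj h g := by
  rintro ⟨i, m, rfl⟩
  exact ⟨i, m⁻¹, by rw [mul_assoc, ← MonoidHom.map_mul, mul_inv_cancel, MonoidHom.map_one, mul_one]⟩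

lemma Adj.mul_left {g h : CoprodI M} (k : CoprodI M) : Adj g h → Adj (k * g) (k * h) := by
  rintro ⟨i, m, rfl⟩
  exact ⟨i, m, by rw [mul_assoc]⟩

lemma sigma_eq_of_adj {g h : CoprodI M} (hgh : Adj g h) (hg : g ≠ 1) (hh : h ≠ 1) :
    sigma g = sigma h := by
  obtain ⟨i, m, rfl⟩ := hgh
  rcases Nat.lt_or_ge (nf g).length 2 with hl | hl
  · interval_cases hlen : (nf g).length
    · exact absurd (nf_eq_nil_iff.mp (List.length_eq_zero_iff.mp hlen)) hg
    · obtain ⟨a, ha⟩ := List.length_eq_one_iff.mp hlen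
      obtain ⟨j, x⟩ := a
      have hx1 : x ≠ 1 := by
        have := nf_ne_one g ⟨j, x⟩ (by rw [ha]; simp)
        simpa using this
      have hgx : g = CoprodI.of x := by
        conv_lhs => rw [← wprod_nf g, ha]
        simp [wprod]
      by_cases hji : j = i
      · subst hji
        by_cases hxm : x * m = 1
        · exact absurd (by rw [hgx, ← MonoidHom.map_mul, hxm, MonoidHom.map_one]) hh
        · have hkey : g * CoprodI.of m = CoprodI.of (x * m) := by
            rw [hgx, ← MonoidHom.map_mul]
          rw [sigma, sigma, ha, hkey, nf_of hxm]
          simp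
      · by_cases hm : m = 1
        · subst hm; simp
        · have key : nf (g * CoprodI.of m) = [⟨j, x⟩, ⟨i, m⟩] := by
            have : g * CoprodI.of m = wprod [⟨j, x⟩, ⟨i, m⟩] := by
              rw [hgx]; simp [wprod]
            rw [this]
            refine nf_eq _ ?_ ?_
            · intro y hy
              rcases List.mem_cons.mp hy with rfl | hy
              · simpa using hx1
              · simp at hy; subst hy; simpa using hm
            · simpa [List.Chain'] using hji
          rw [sigma, sigma, key, ha]
          simp
  · rw [sigma, sigma, (letter_lemma g i m).2 hl]

/-- relation: adjacent and both in S -/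
def Rel (S : Set (CoprodI M)) (g h : CoprodI M) : Prop := Adj g h ∧ g ∈ S ∧ h ∈ S

lemma rel_symm (S : Set (CoprodI M)) : Symmetric (Rel S) := by
  rintro x y ⟨h1, h2, h3⟩
  exact ⟨h1.symm, h3, h2⟩

lemma sigma_const_of_walk {S : Set (CoprodI M)} (hS : (1 : CoprodI M) ∉ S) {x y : CoprodI M}
    (hxy : Relation.ReflTransGen (Rel S) x y) : sigma x = sigma y := by
  induction hxy with
  | refl => rfl
  | @tail b c hab hbc ih =>
    obtain ⟨hadj, hbS, hcS⟩ := hbc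
    have hb1 : b ≠ 1 := by rintro rfl; exact hS hbS
    have hc1 : c ≠ 1 := by rintro rfl; exact hS hcS
    rw [ih, sigma_eq_of_adj hadj hb1 hc1]
end FPFI
open Monoid
namespace FPFI
set_option linter.unusedSectionVars false
variable {M : Bool → Type} [∀ i, Group (M i)] [∀ i, DecidableEq (M i)]

lemma exists_cyc_aux [∀ i, Nontrivial (M i)] {N : Subgroup (CoprodI M)} (hnorm : N.Normal) :
    ∀ k : ℕ, ∀ n ∈ N, n ≠ 1 → (nf n).length ≤ k →
    ∃ w ∈ N, nf w ≠ [] ∧ (∀ x ∈ (nf w).getLast?, ∀ y ∈ (nf w).head?, x.fst ≠ y.fst) := by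
  intro k
  induction k using Nat.strong_induction_on with
  | _ k ih =>
  intro n hnN hn1 hlen
  have hnil : nf n ≠ [] := fun hcon => hn1 (nf_eq_nil_iff.mp hcon)
  rcases (nf n).eq_nil_or_concat with hc | ⟨l', b, hc0⟩
  · exact absurd hc hnil
  have hc : nf n = l' ++ [b] := by simpa using hc0
  cases l' with
  | nil =>
    -- length one: n = of x
    obtain ⟨i, x⟩ := b
    have hx1 : x ≠ 1 := by
      have := nf_ne_one n ⟨i, x⟩ (by rw [hc]; simp)
      simpa using this
    have hgx : n = CoprodI.of x := by
      conv_lhs => rw [← wprod_nf n, hc]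
      simp [wprod]
    obtain ⟨y, hy1⟩ := exists_ne (1 : M (!i))
    refine ⟨CoprodI.of y * n * (CoprodI.of y)⁻¹ * n⁻¹, ?_, ?_⟩
    · exact mul_mem (hnorm.conj_mem n hnN (CoprodI.of y)) (inv_mem hnN)
    · have key : nf (CoprodI.of y * n * (CoprodI.of y)⁻¹ * n⁻¹) =
          [⟨!i, y⟩, ⟨i, x⟩, ⟨!i, y⁻¹⟩, ⟨i, x⁻¹⟩] := by
        have hprod : CoprodI.of y * n * (CoprodI.of y)⁻¹ * n⁻¹ =
            wprod [⟨!i, y⟩, ⟨i, x⟩, ⟨!i, y⁻¹⟩, ⟨i, x⁻¹⟩] := by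
          rw [hgx]
          simp [wprod, mul_assoc]
        rw [hprod]
        refine nf_eq _ ?_ ?_
        · intro z hz
          simp at hz
          rcases hz with hz | hz | hz | hz <;> (subst hz; simp [hx1, hy1])
        · simp [List.Chain', List.isChain_cons_cons]
      rw [key]
      refine ⟨by simp, ?_⟩
      intro p hp q hq
      simp at hp hq
      subst hp; subst hq
      simp
  | cons a mid =>
    by_cases hab : b.fst = a.fst
    · -- not cyclically reduced: conjugate to shorten
      obtain ⟨ia, x⟩ := a
      obtain ⟨ib, z⟩ := b
      simp only at hab
      subst hab
      have hch : (((⟨ib, x⟩ : Σ i, M i) :: mid) ++ [(⟨ib, z⟩ : Σ i, M i)]).Chain'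
          (fun p q => p.fst ≠ q.fst) := by
        rw [← hc]; exact nf_chain n
      have hch' := List.isChain_append.mp hch
      cases hmid : mid with
      | nil =>
        subst hmid
        exfalso
        have := hch'.2.2 ⟨ib, x⟩ (by simp) ⟨ib, z⟩ (by simp)
        simp at this
      | cons c mid' =>
        have hmidne : mid ≠ [] := by rw [hmid]; simp
        have hn : n = CoprodI.of x * wprod mid * CoprodI.of z := by
          conv_lhs => rw [← wprod_nf n, hc]
          rw [wprod_concat, wprod_cons]
        set n' := (CoprodI.of x)⁻¹ * n * CoprodI.of x with hn'def
        have hn'N : n' ∈ N := by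
          rw [hn'def]
          have := hnorm.conj_mem n hnN (CoprodI.of x)⁻¹
          simpa [mul_assoc] using this
        have hn'val : n' = wprod mid * CoprodI.of (z * x) := by
          rw [hn'def, hn, MonoidHom.map_mul]
          simp [mul_assoc]
        have hmidne1 : ∀ p ∈ mid, p.snd ≠ (1 : M p.fst) := by
          intro p hp
          exact nf_ne_one n p (by rw [hc]; exact List.mem_append_left _ (List.mem_cons_of_mem _ hp))
        have hmidch : mid.Chain' (fun p q => p.fst ≠ q.fst) :=
          (List.isChain_cons.mp hch'.1).2
        have hmidlast : ∀ p ∈ mid.getLast?, p.fst ≠ ib := by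
          intro p hp
          refine hch'.2.2 p ?_ ⟨ib, z⟩ (by simp)
          rw [List.getLast?_cons]
          cases hm2 : mid.getLast? with
          | none => exact absurd (List.getLast?_eq_none_iff.mp hm2) hmidne
          | some q =>
            rw [hm2] at hp
            simp at hp
            subst hp
            simp
        by_cases hzx : z * x = 1
        · have hn'2 : n' = wprod mid := by rw [hn'val, hzx, MonoidHom.map_one, mul_one]
          have hnf' : nf n' = mid := by rw [hn'2]; exact nf_eq _ hmidne1 hmidch
          have hne1 : n' ≠ 1 := fun hcon => hmidne (by rw [← hnf', hcon, nf_one])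
          refine ih (k - 1) ?_ n' hn'N hne1 ?_
          · have h3 : 3 ≤ (nf n).length := by
              rw [hc, hmid]; simp
            omega
          · rw [hnf']
            have h4 : (nf n).length = mid.length + 2 := by rw [hc]; simp
            omega
        · have hnf' : nf n' = mid ++ [⟨ib, z * x⟩] := by
            rw [hn'val, show wprod mid * CoprodI.of (z * x)
              = wprod (mid ++ [(⟨ib, z * x⟩ : Σ i, M i)]) by rw [wprod_concat]]
            refine nf_eq _ ?_ ?_
            · intro p hp
              rcases List.mem_append.mp hp with hp | hp
              · exact hmidne1 p hp
              · simp at hp; subst hp; simpa using hzx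
            · refine List.isChain_append.mpr ⟨hmidch, List.isChain_singleton _, ?_⟩
              intro p hp q hq
              simp at hq; subst hq
              exact hmidlast p hp
          have hne1 : n' ≠ 1 := by
            intro hcon
            rw [hcon, nf_one] at hnf'
            exact absurd hnf'.symm (by simp)
          refine ih (k - 1) ?_ n' hn'N hne1 ?_
          · have h3 : 3 ≤ (nf n).length := by rw [hc, hmid]; simp
            omega
          · rw [hnf']
            have h4 : (nf n).length = mid.length + 2 := by rw [hc]; simp
            simp
            omega
    · -- n itself is cyclically reduced
      refine ⟨n, hnN, hnil, ?_⟩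
      intro p hp q hq
      rw [hc] at hp hq
      rw [List.getLast?_append] at hp
      simp at hp
      subst hp
      have hqa : q = a := by
        rw [List.cons_append, List.head?_cons] at hq
        exact (by simpa using hq : a = q).symm
      subst hqa
      exact hab

lemma exists_cyc [∀ i, Nontrivial (M i)] {N : Subgroup (CoprodI M)} (hnorm : N.Normal)
    (hbot : N ≠ ⊥) :
    ∃ w ∈ N, nf w ≠ [] ∧ (∀ x ∈ (nf w).getLast?, ∀ y ∈ (nf w).head?, x.fst ≠ y.fst) := by
  obtain ⟨⟨n, hnN⟩, hne⟩ := Subgroup.ne_bot_iff_exists_ne_one.mp hbot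
  have hn1 : n ≠ 1 := by simpa [Subtype.ext_iff] using hne
  exact exists_cyc_aux hnorm (nf n).length n hnN hn1 le_rfl
end FPFI
open Monoid
namespace FPFI
set_option linter.unusedSectionVars false
set_option maxHeartbeats 1000000
variable {M : Bool → Type} [∀ i, Group (M i)] [∀ i, DecidableEq (M i)]

lemma walk_pref {S : Set (CoprodI M)} (g : CoprodI M) (l : List (Σ i, M i))
    (h : ∀ q, q <+: l → g * wprod q ∈ S) :
    Relation.ReflTransGen (Rel S) g (g * wprod l) := by
  induction l using List.reverseRecOn with
  | nil => simpa using Relation.ReflTransGen.refl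
  | append_singleton l a ih =>
    refine Relation.ReflTransGen.tail (ih fun q hq => h q (hq.trans (l.prefix_append [a]))) ?_
    refine ⟨⟨a.fst, a.snd, by rw [wprod_concat, mul_assoc]⟩, ?_, ?_⟩
    · exact h l (l.prefix_append [a])
    · exact h (l ++ [a]) List.prefix_rfl

lemma walk_translate {S S' : Set (CoprodI M)} {x y : CoprodI M} (k : CoprodI M)
    (hS : ∀ s ∈ S, k * s ∈ S') (hxy : Relation.ReflTransGen (Rel S) x y) :
    Relation.ReflTransGen (Rel S') (k * x) (k * y) := by
  refine Relation.ReflTransGen.lift (fun z => k * z) ?_ x y hxy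
  rintro a b ⟨hadj, haS, hbS⟩
  exact ⟨hadj.mul_left k, hS a haS, hS b hbS⟩

theorem main_coprodI [∀ i, Nontrivial (M i)] (N : Subgroup (CoprodI M)) (hnorm : N.Normal)
    (hbot : N ≠ ⊥) (hfg : N.FG) : Finite (CoprodI M ⧸ N) := by
  classical
  obtain ⟨T, hT⟩ := hfg
  -- the finite set of "edges" : prefixes of generators and their inverses
  set K : Set (CoprodI M) :=
    ⋃ t ∈ (T : Set (CoprodI M)), wprod '' {l | l <+: nf t ∨ l <+: nf t⁻¹} with hK
  have hKfin : K.Finite := by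
    refine Set.Finite.biUnion T.finite_toSet fun t _ => Set.Finite.image _ ?_
    have h1 : {l : List (Σ i, M i) | l <+: nf t ∨ l <+: nf t⁻¹}
        ⊆ ↑((nf t).inits.toFinset ∪ (nf t⁻¹).inits.toFinset) := by
      intro l hl
      simp only [Finset.coe_union, List.coe_toFinset, Set.mem_union, Set.mem_setOf_eq,
        List.mem_inits]
      exact hl
    exact Set.Finite.subset (Finset.finite_toSet _) h1
  have hTne : (T : Set (CoprodI M)).Nonempty := by
    by_contra hcon
    rw [Set.not_nonempty_iff_eq_empty] at hcon
    apply hbot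
    rw [← hT]
    rw [show (T : Set (CoprodI M)) = ∅ from hcon]
    simp
  have h1K : (1 : CoprodI M) ∈ K := by
    obtain ⟨t, ht⟩ := hTne
    exact Set.mem_biUnion ht ⟨[], Or.inl (List.nil_prefix), rfl⟩
  set S : Set (CoprodI M) := {g | ∃ n ∈ N, ∃ k ∈ K, g = n * k} with hS
  have h1S : (1 : CoprodI M) ∈ S := ⟨1, one_mem N, 1, h1K, by simp⟩
  have hNS : ∀ n ∈ N, (n : CoprodI M) ∈ S := fun n hn => ⟨n, hn, 1, h1K, by simp⟩
  have hSmul : ∀ n ∈ N, ∀ s ∈ S, n * s ∈ S := by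
    rintro n hn s ⟨n', hn', k, hk, rfl⟩
    exact ⟨n * n', mul_mem hn hn', k, hk, by rw [mul_assoc]⟩
  -- connectivity: every element of S is connected to 1 within S
  have hwalkN : ∀ n ∈ N, Relation.ReflTransGen (Rel S) 1 n := by
    intro n hn
    rw [← hT] at hn
    induction hn using Subgroup.closure_induction with
    | one => exact Relation.ReflTransGen.refl
    | mem t ht =>
      have hw := walk_pref (S := S) 1 (nf t) (fun q hq => by
        rw [one_mul]
        exact ⟨1, one_mem N, wprod q, Set.mem_biUnion ht ⟨q, Or.inl hq, rfl⟩, (one_mul _).symm⟩)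
      rw [one_mul, wprod_nf] at hw
      exact hw
    | mul x y hx hy ihx ihy =>
      refine Relation.ReflTransGen.trans ihx ?_
      have := walk_translate (S := S) (S' := S) x (fun s hs => hSmul x (hT ▸ hx) s hs) ihy
      rwa [mul_one] at this
    | inv x hx ihx =>
      have h1 := walk_translate (S := S) (S' := S) x⁻¹
        (fun s hs => hSmul x⁻¹ (inv_mem (hT ▸ hx)) s hs) ihx
      rw [mul_one, inv_mul_cancel] at h1
      exact (@Relation.ReflTransGen.symmetric _ (Rel S) ⟨fun _ _ h => rel_symm S h⟩).symm _ _ h1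
  have hconn : ∀ s ∈ S, Relation.ReflTransGen (Rel S) 1 s := by
    rintro s ⟨n, hn, k, hk, rfl⟩
    refine Relation.ReflTransGen.trans (hwalkN n hn) ?_
    simp only [hK, Set.mem_iUnion] at hk
    obtain ⟨t, ht, l, hl, rfl⟩ := hk
    refine walk_pref n l fun q hq => ?_
    have hqK : wprod q ∈ K := by
      rcases hl with hl | hl
      · exact Set.mem_biUnion ht ⟨q, Or.inl (hq.trans hl), rfl⟩
      · exact Set.mem_biUnion ht ⟨q, Or.inr (hq.trans hl), rfl⟩
    exact ⟨n, hn, wprod q, hqK, rfl⟩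
  -- the cyclically reduced element w of N
  obtain ⟨w, hwN, hwne, hwsep⟩ := exists_cyc hnorm hbot
  have hhead : (nf w).head? = some ((nf w).head hwne) := List.head?_eq_head hwne
  have hlast : (nf w).getLast? = some ((nf w).getLast hwne) := List.getLast?_eq_getLast hwne
  set a : Bool := ((nf w).head hwne).fst with ha
  set b : Bool := ((nf w).getLast hwne).fst with hb
  have hba : b ≠ a :=
    hwsep ((nf w).getLast hwne) (by rw [hlast]; rfl) ((nf w).head hwne) (by rw [hhead]; rfl)
  have hwinvnf : nf w⁻¹ = (nf w).reverse.map (fun x => (⟨x.fst, x.snd⁻¹⟩ : Σ i, M i)) := nf_inv w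
  have hwinvne : nf w⁻¹ ≠ [] := by
    rw [hwinvnf]
    simpa using hwne
  have hwinvhead : (nf w⁻¹).head? = some ⟨b, ((nf w).getLast hwne).snd⁻¹⟩ := by
    rw [hwinvnf, List.head?_map, List.head?_reverse, hlast]
    rfl
  have hwinvlast : (nf w⁻¹).getLast? = some ⟨a, ((nf w).head hwne).snd⁻¹⟩ := by
    rw [hwinvnf, ← List.head?_reverse, ← List.map_reverse, List.reverse_reverse,
      List.head?_map, hhead]
    rfl
  have hwinvsep : ∀ x ∈ (nf w⁻¹).getLast?, ∀ y ∈ (nf w⁻¹).head?, x.fst ≠ y.fst := by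
    intro x hx y hy
    rw [hwinvlast] at hx
    rw [hwinvhead] at hy
    simp only [Option.mem_def, Option.some_inj] at hx hy
    subst hx; subst hy
    exact hba.symm
  -- every element of the group lies in S
  have hmain : ∀ g : CoprodI M, g ∈ S := by
    intro g
    set S' : Set (CoprodI M) := (fun s => g⁻¹ * s) '' S with hS'
    by_contra hgS
    have h1S' : (1 : CoprodI M) ∉ S' := by
      rintro ⟨s, hs, hs1⟩
      have hsg : s = g := by
        have := congrArg (fun z => g * z) hs1
        simpa [mul_assoc] using this
      exact hgS (hsg ▸ hs)
    set L := (nf g⁻¹).length with hL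
    have hwlen : 1 ≤ (nf w).length := List.length_pos_iff.mpr hwne
    have hwinvlen : 1 ≤ (nf w⁻¹).length := List.length_pos_iff.mpr hwinvne
    -- the two special elements of S'
    have hx1mem : w ^ (L + 2) * g⁻¹ ∈ S' := by
      refine ⟨g * w ^ (L + 2) * g⁻¹, hNS _ (hnorm.conj_mem _ (pow_mem hwN _) g), ?_⟩
      simp [mul_assoc]
    have hx2mem : w⁻¹ ^ (L + 2) * g⁻¹ ∈ S' := by
      refine ⟨g * w⁻¹ ^ (L + 2) * g⁻¹, hNS _ (hnorm.conj_mem _ (pow_mem (inv_mem hwN) _) g), ?_⟩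
      simp [mul_assoc]
    -- compute their sides
    have hpow1 := nf_pow w hwne hwsep (L + 1)
    have hpow2 := nf_pow w⁻¹ hwinvne hwinvsep (L + 1)
    have hσ1 : sigma (w ^ (L + 2) * g⁻¹) = some a := by
      have hbound : (nf g⁻¹).length + 2 ≤ (nf (w ^ (L + 2))).length := by
        have := hpow1.2.2
        nlinarith
      have hwords := (words_lemma (nf g⁻¹) (w ^ (L + 2))).2 hbound
      rw [wprod_nf] at hwords
      rw [sigma, hwords, hpow1.1, hhead]
      rfl
    have hσ2 : sigma (w⁻¹ ^ (L + 2) * g⁻¹) = some b := by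
      have hbound : (nf g⁻¹).length + 2 ≤ (nf (w⁻¹ ^ (L + 2))).length := by
        have := hpow2.2.2
        nlinarith
      have hwords := (words_lemma (nf g⁻¹) (w⁻¹ ^ (L + 2))).2 hbound
      rw [wprod_nf] at hwords
      rw [sigma, hwords, hpow2.1, hwinvhead]
      rfl
    -- a walk in S' between them
    obtain ⟨s1, hs1S, hs1⟩ := hx1mem
    obtain ⟨s2, hs2S, hs2⟩ := hx2mem
    have hwalkS : Relation.ReflTransGen (Rel S) s1 s2 :=
      Relation.ReflTransGen.trans
        ((@Relation.ReflTransGen.symmetric _ (Rel S) ⟨fun _ _ h => rel_symm S h⟩).symm _ _ (hconn s1 hs1S)) (hconn s2 hs2S)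
    have hwalkS' : Relation.ReflTransGen (Rel S') (g⁻¹ * s1) (g⁻¹ * s2) :=
      walk_translate g⁻¹ (fun s hs => ⟨s, hs, rfl⟩) hwalkS
    have hs1' : g⁻¹ * s1 = w ^ (L + 2) * g⁻¹ := hs1
    have hs2' : g⁻¹ * s2 = w⁻¹ ^ (L + 2) * g⁻¹ := hs2
    rw [hs1', hs2'] at hwalkS'
    have := sigma_const_of_walk h1S' hwalkS'
    rw [hσ1, hσ2] at this
    exact hba.symm (Option.some_inj.mp this)
  -- conclude the quotient is finite
  have hsub : (Set.univ : Set (CoprodI M ⧸ N)) ⊆ QuotientGroup.mk '' K := by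
    rintro q -
    induction q using QuotientGroup.induction_on with
    | _ g =>
      obtain ⟨n, hn, k, hk, rfl⟩ := hmain g
      refine ⟨k, hk, ?_⟩
      symm
      rw [QuotientGroup.eq]
      have := hnorm.conj_mem n⁻¹ (inv_mem hn) k⁻¹
      simpa [mul_assoc] using this
  exact Set.finite_univ_iff.mp ((hKfin.image _).subset hsub)
end FPFI
open Monoid
namespace FPFI
set_option linter.unusedSectionVars false

variable (G₁ G₂ : Type) [Group G₁] [Group G₂]

/-- the two factors indexed by `Bool` -/
def Fb : Bool → Type := fun b => cond b G₁ G₂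

instance : ∀ b, Group (Fb G₁ G₂ b) := fun b =>
  Bool.casesOn b (inferInstanceAs (Group G₂)) (inferInstanceAs (Group G₁))

/-- the isomorphism between the binary coproduct and the indexed coproduct -/
noncomputable def coprodEquiv : Coprod G₁ G₂ ≃* CoprodI (Fb G₁ G₂) :=
  MonoidHom.toMulEquiv
    (Coprod.lift (CoprodI.of (M := Fb G₁ G₂) (i := true)) (CoprodI.of (M := Fb G₁ G₂) (i := false)))
    (CoprodI.lift (fun b => Bool.casesOn
      (motive := fun b => Fb G₁ G₂ b →* Coprod G₁ G₂) b Coprod.inr Coprod.inl))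
    (by
      apply Coprod.hom_ext
      · ext x
        simp only [MonoidHom.comp_apply, MonoidHom.id_apply, Coprod.lift_apply_inl]
        exact CoprodI.lift_of _ _
      · ext x
        simp only [MonoidHom.comp_apply, MonoidHom.id_apply, Coprod.lift_apply_inr]
        exact CoprodI.lift_of _ _)
    (by
      apply CoprodI.ext_hom
      intro i
      cases i
      · ext x
        simp only [MonoidHom.comp_apply, MonoidHom.id_apply, CoprodI.lift_of]
        exact Coprod.lift_apply_inr _ _ _
      · ext x
        simp only [MonoidHom.comp_apply, MonoidHom.id_apply, CoprodI.lift_of]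
        exact Coprod.lift_apply_inl _ _ _)

variable {G₁ G₂}

lemma part1 (hnt1 : Nontrivial G₁) (hnt2 : Nontrivial G₂) (N : Subgroup (Coprod G₁ G₂))
    (hnorm : N.Normal) (hbot : N ≠ ⊥) (hfg : N.FG) : Finite (Coprod G₁ G₂ ⧸ N) := by
  classical
  haveI : ∀ b, Nontrivial (Fb G₁ G₂ b) := fun b =>
    Bool.casesOn b (by exact hnt2) (by exact hnt1)
  set e := coprodEquiv G₁ G₂ with he
  set N' := N.map e.toMonoidHom with hN'
  haveI hN'norm : N'.Normal := hnorm.map e.toMonoidHom e.surjective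
  have hN'bot : N' ≠ ⊥ := by
    have hinj : Function.Injective ⇑(e.toMonoidHom) := e.injective
    intro hcon
    exact hbot ((Subgroup.map_eq_bot_iff_of_injective _ hinj).mp hcon)
  have hN'fg : N'.FG := by
    obtain ⟨T, hT⟩ := hfg
    exact ⟨T.image ⇑e.toMonoidHom, by rw [Finset.coe_image, ← MonoidHom.map_closure, hT]⟩
  haveI := main_coprodI N' hN'norm hN'bot hN'fg
  exact Finite.of_equiv _ (QuotientGroup.congr N N' e rfl).symm.toEquiv

end FPFI

/-- A nontrivial finitely generated normal subgroup of a free product of two nontrivial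
groups has finite index.  Consequently, a finitely generated group possessing a
nontrivial finitely generated normal subgroup with infinite quotient does not split as
a free product of two nontrivial groups. -/
theorem normal_fg_subgroup_of_free_product_finiteIndex :
    (∀ (G₁ G₂ : Type) [Group G₁] [Group G₂], Nontrivial G₁ → Nontrivial G₂ →
      ∀ N : Subgroup (Monoid.Coprod G₁ G₂), N.Normal → N ≠ ⊥ → N.FG →
        N.FiniteIndex) ∧
    (∀ (G : Type) [Group G], Group.FG G →
      (∃ K : Subgroup G, K.Normal ∧ K ≠ ⊥ ∧ K.FG ∧ Infinite (G ⧸ K)) →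
      ∀ (G₁ G₂ : Type) [Group G₁] [Group G₂], Nontrivial G₁ → Nontrivial G₂ →
        IsEmpty (G ≃* Monoid.Coprod G₁ G₂)) := by
  constructor
  · intro G₁ G₂ _ _ hnt1 hnt2 N hnorm hbot hfg
    haveI := FPFI.part1 hnt1 hnt2 N hnorm hbot hfg
    exact ⟨Nat.card_ne_zero.mpr ⟨inferInstance, inferInstance⟩⟩
  · rintro G _ _ ⟨K, hKnorm, hKbot, hKfg, hKinf⟩ G₁ G₂ _ _ hnt1 hnt2
    classical
    constructor
    intro e
    set K' := K.map e.toMonoidHom with hK'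
    haveI hK'norm : K'.Normal := hKnorm.map e.toMonoidHom e.surjective
    have hK'bot : K' ≠ ⊥ := by
      have hinj : Function.Injective ⇑(e.toMonoidHom) := e.injective
      intro hcon
      exact hKbot ((Subgroup.map_eq_bot_iff_of_injective _ hinj).mp hcon)
    have hK'fg : K'.FG := by
      obtain ⟨T, hT⟩ := hKfg
      exact ⟨T.image ⇑e.toMonoidHom, by rw [Finset.coe_image, ← MonoidHom.map_closure, hT]⟩
    haveI : Finite (Monoid.Coprod G₁ G₂ ⧸ K') := FPFI.part1 hnt1 hnt2 K' hK'norm hK'bot hK'fg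
    haveI : Finite (G ⧸ K) := Finite.of_equiv _ (QuotientGroup.congr K K' e rfl).symm.toEquiv
    exact not_finite (G ⧸ K)
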